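/- For an odd prime power q, the polynomial X³ − X² − 2X + 1 splits over F_q if and only if q ≡ 0, 1, or −1 modulo 7. -/

import Mathlib

open Polynomial

lemma mem_range_of_pow_card_eq {F K : Type*} [Field F] [Fintype F] [Field K] [Algebra F K]
    {x : K} (hx : x ^ Fintype.card F = x) : ∃ y : F, algebraMap F K y = x := by
  letI := Classical.decEq K
  by_contra hcon
  push_neg at hcon
  have hq1 : 1 < Fintype.card F := Fintype.one_lt_card
  set P : K[X] := X ^ Fintype.card F - X with hP
  have hPd : P.natDegree = Fintype.card F :=
    FiniteField.X_pow_card_sub_X_natDegree_eq K hq1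
  have hP0 : P ≠ 0 := FiniteField.X_pow_card_sub_X_ne_zero K hq1
  have hnotmem : x ∉ Finset.univ.image (algebraMap F K) := by
    simp only [Finset.mem_image, Finset.mem_univ, true_and]
    rintro ⟨y, hy⟩
    exact hcon y hy
  have hsub : insert x (Finset.univ.image (algebraMap F K)) ⊆ P.roots.toFinset := by
    intro z hz
    rw [Multiset.mem_toFinset, mem_roots hP0]
    rcases Finset.mem_insert.mp hz with h | h
    · subst h
      simp [hP, IsRoot, hx]
    · obtain ⟨y, -, rfl⟩ := Finset.mem_image.mp h
      have : (algebraMap F K y) ^ Fintype.card F = algebraMap F K y := by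
        rw [← map_pow, FiniteField.pow_card]
      simp [hP, IsRoot, this]
  have hcard1 : (insert x (Finset.univ.image (algebraMap F K))).card
      = Fintype.card F + 1 := by
    rw [Finset.card_insert_of_notMem hnotmem,
      Finset.card_image_of_injective _ (algebraMap F K).injective, Finset.card_univ]
  have hle : (insert x (Finset.univ.image (algebraMap F K))).card ≤ P.roots.toFinset.card :=
    Finset.card_le_card hsub
  have hle2 : P.roots.toFinset.card ≤ Fintype.card F := by
    calc P.roots.toFinset.card ≤ Multiset.card P.roots := Multiset.toFinset_card_le _
      _ ≤ P.natDegree := P.card_roots'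
      _ = Fintype.card F := hPd
  omega

/-- For a finite field `F` of odd order `q`, the polynomial `X³ - X² - 2X + 1` splits over `F`
if and only if `q ≡ 0, 1, or -1 (mod 7)`. -/
theorem cubic_splits_iff_mod_seven {F : Type*} [Field F] [Fintype F]
    (hodd : Odd (Fintype.card F)) :
    (X ^ 3 - X ^ 2 - 2 * X + 1 : F[X]).Splits ↔
      Fintype.card F % 7 = 0 ∨ Fintype.card F % 7 = 1 ∨ Fintype.card F % 7 = 6 := by
  obtain ⟨p, hc⟩ := CharP.exists F
  obtain ⟨n, hp, hcard⟩ := FiniteField.card F p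
  haveI : Fact p.Prime := ⟨hp⟩
  haveI : Fact (Nat.Prime 7) := ⟨by norm_num⟩
  have hq1 : 1 < Fintype.card F := Fintype.one_lt_card
  have hn0 : (n : ℕ) ≠ 0 := n.ne_zero
  by_cases h7 : p = 7
  · -- characteristic 7
    subst h7
    have hdvd : 7 ∣ Fintype.card F := hcard ▸ dvd_pow_self 7 hn0
    constructor
    · intro _
      exact Or.inl (by omega)
    · intro _
      have hF7 : (7 : F) = 0 := by
        have := CharP.cast_eq_zero F 7
        exact_mod_cast this
      have h7X : (7 : F[X]) = 0 := by
        rw [show (7 : F[X]) = C (7 : F) from (map_ofNat C 7).symm, hF7, map_zero]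
      have hfac : (X ^ 3 - X ^ 2 - 2 * X + 1 : F[X]) = (X - C (-2)) ^ 3 := by
        rw [show (C (-2 : F) : F[X]) = -2 by rw [map_neg, map_ofNat]]
        linear_combination (-(X + 1) ^ 2 : F[X]) * h7X
      rw [hfac]
      exact (Splits.X_sub_C _).pow 3
  · -- characteristic ≠ 7
    set K := AlgebraicClosure F
    haveI hKp : CharP K p := charP_of_injective_algebraMap (algebraMap F K).injective p
    haveI : ExpChar K p := ExpChar.prime hp
    have hp7K : (7 : K) ≠ 0 := by
      intro h
      have h' : ((7 : ℕ) : K) = 0 := by exact_mod_cast h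
      have hdvd := (CharP.cast_eq_zero_iff K p 7).mp h'
      rcases (Nat.Prime.eq_one_or_self_of_dvd (by norm_num) p hdvd) with h1 | h1
      · exact hp.one_lt.ne' h1
      · exact h7 h1
    have hpow : ∀ x : K, x ^ Fintype.card F = iterateFrobenius K p (n : ℕ) x := by
      intro x
      rw [iterateFrobenius_def, hcard]
    constructor
    · -- splits → mod condition
      intro hs
      have hdeg : (X ^ 3 - X ^ 2 - 2 * X + 1 : F[X]).degree = 3 := by
        compute_degree!
      obtain ⟨r, hr⟩ := hs.exists_eval_eq_zero (by rw [hdeg]; exact (by norm_num))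
      have hr' : r ^ 3 - r ^ 2 - 2 * r + 1 = 0 := by
        simpa using hr
      set s : K := algebraMap F K r with hs_def
      have hs3 : s ^ 3 - s ^ 2 - 2 * s + 1 = 0 := by
        have := congrArg (algebraMap F K) hr'
        simpa [map_sub, map_add, map_pow, map_mul, map_one, map_zero, map_ofNat] using this
      obtain ⟨z, hz⟩ := IsAlgClosed.exists_root (X ^ 2 + C s * X + 1 : K[X]) (by
        have : (X ^ 2 + C s * X + 1 : K[X]).degree = 2 := by compute_degree!
        rw [this]; exact (by norm_num))
      have hz' : z ^ 2 + s * z + 1 = 0 := by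
        simpa using hz
      have hz0 : z ≠ 0 := by
        intro h; rw [h] at hz'; simp at hz'
      have hz7 : z ^ 7 = 1 := by
        linear_combination (z^5 - s*z^4 + (s^2-1)*z^3 + (2*s - s^3)*z^2
          + (s^4 - 3*s^2 + 1)*z + (-s^5 + 4*s^3 - 3*s)) * hz'
          + ((s^2 + s - 1) + z*(s^3 + s^2 - 2*s - 1)) * hs3
      have hz1 : z ≠ 1 := by
        intro h
        subst h
        have hs2 : s = -2 := by linear_combination hz'
        have h70 : (7 : K) = 0 := by
          linear_combination (-1 : K) * hs3 + (s^2 - 3*s + 4) * hs2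
        exact hp7K h70
      have hord : orderOf z = 7 := orderOf_eq_prime hz7 hz1
      have hsq : s ^ Fintype.card F = s := by
        rw [hs_def, ← map_pow, FiniteField.pow_card]
      have hzq : (z ^ Fintype.card F) ^ 2 + s * z ^ Fintype.card F + 1 = 0 := by
        have h := congrArg (iterateFrobenius K p (n : ℕ)) hz'
        simp only [map_add, map_mul, map_pow, map_one, map_zero] at h
        rw [← hpow, ← hpow, hsq] at h
        exact h
      have hfac : (z ^ Fintype.card F - z) * (z ^ Fintype.card F + z + s) = 0 := by
        linear_combination hzq - hz'
      rcases mul_eq_zero.mp hfac with h | h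
      · have heq : z ^ Fintype.card F = z := by linear_combination h
        have hpow1 : z ^ (Fintype.card F - 1) = 1 := by
          have h1 : z ^ (Fintype.card F - 1) * z = 1 * z := by
            rw [one_mul, ← pow_succ, Nat.sub_add_cancel (by omega)]
            exact heq
          exact mul_right_cancel₀ hz0 h1
        have hdvd : 7 ∣ Fintype.card F - 1 := hord ▸ orderOf_dvd_of_pow_eq_one hpow1
        right; left; omega
      · have hpow1 : z ^ (Fintype.card F + 1) = 1 := by
          rw [pow_succ]
          linear_combination z * h - hz'
        have hdvd : 7 ∣ Fintype.card F + 1 := hord ▸ orderOf_dvd_of_pow_eq_one hpow1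
        right; right; omega
    · -- mod condition → splits
      intro hmod
      have hm : Fintype.card F % 7 = 1 ∨ Fintype.card F % 7 = 6 := by
        rcases hmod with h | h | h
        · exfalso
          have hdvd : 7 ∣ Fintype.card F := by omega
          rw [hcard] at hdvd
          have : (7 : ℕ) ∣ p := Nat.Prime.dvd_of_dvd_pow (by norm_num) hdvd
          exact h7 ((Nat.prime_dvd_prime_iff_eq (by norm_num) hp).mp this).symm
        · exact Or.inl h
        · exact Or.inr h
      haveI : NeZero (7 : K) := ⟨hp7K⟩
      obtain ⟨z, hz⟩ := IsAlgClosed.exists_root (cyclotomic 7 K) (by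
        rw [degree_cyclotomic]
        norm_num [Nat.totient_prime (by norm_num : Nat.Prime 7)])
      have hprim : IsPrimitiveRoot z 7 := (isRoot_cyclotomic_iff).mp hz
      have hz7 : z ^ 7 = 1 := hprim.pow_eq_one
      have hz1 : z ≠ 1 := hprim.ne_one (by norm_num)
      have hsum : 1 + z + z^2 + z^3 + z^4 + z^5 + z^6 = 0 := by
        have hne : z - 1 ≠ 0 := sub_ne_zero.mpr hz1
        have hmul : (z - 1) * (1 + z + z^2 + z^3 + z^4 + z^5 + z^6) = 0 := by
          linear_combination hz7
        exact (mul_eq_zero.mp hmul).resolve_left hne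
      have hred : ∀ m : ℕ, z ^ m = z ^ (m % 7) := by
        intro m
        conv_lhs => rw [← Nat.div_add_mod m 7]
        rw [pow_add, pow_mul, hz7, one_pow, one_mul]
      have hzq : z ^ Fintype.card F = z ^ (Fintype.card F % 7) := hred _
      have key : ∀ i j : ℕ, (-(z^i + z^j)) ^ Fintype.card F
          = -((z ^ Fintype.card F)^i + (z ^ Fintype.card F)^j) := by
        intro i j
        rw [hpow, map_neg, map_add, map_pow, map_pow, ← hpow]
      have hfix : ∀ i j : ℕ, 6 * i % 7 = j → 6 * j % 7 = i →
          (-(z^i + z^j)) ^ Fintype.card F = -(z^i + z^j) := by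
        intro i j hij hji
        rw [key, hzq]
        rcases hm with h | h
        · rw [h, pow_one]
        · rw [h, ← pow_mul, ← pow_mul, hred (6*i), hred (6*j), hij, hji]
          ring
      obtain ⟨a, ha⟩ := mem_range_of_pow_card_eq (hfix 1 6 (by norm_num) (by norm_num))
      obtain ⟨b, hb⟩ := mem_range_of_pow_card_eq (hfix 2 5 (by norm_num) (by norm_num))
      obtain ⟨c, hc⟩ := mem_range_of_pow_card_eq (hfix 3 4 (by norm_num) (by norm_num))
      have v1 : (-(z^1+z^6)) + (-(z^2+z^5)) + (-(z^3+z^4)) = 1 := by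
        linear_combination (-1 : K) * hsum
      have v2 : (-(z^1+z^6)) * (-(z^2+z^5)) + (-(z^1+z^6)) * (-(z^3+z^4))
          + (-(z^2+z^5)) * (-(z^3+z^4)) = -2 := by
        linear_combination (z^4+z^3+2*z^2+2*z) * hz7 + 2 * hsum
      have v3 : (-(z^1+z^6)) * (-(z^2+z^5)) * (-(z^3+z^4)) = -1 := by
        linear_combination (-(z^8+z^7+z^5+z^4+z^3+z^2+z+2)) * hz7 + (-1 : K) * hsum
      have inj := (algebraMap F K).injective
      have f1 : a + b + c = 1 := by
        apply inj
        rw [map_add, map_add, ha, hb, hc, map_one]; exact v1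
      have f2 : a*b + a*c + b*c = -2 := by
        apply inj
        rw [map_add, map_add, map_mul, map_mul, map_mul, ha, hb, hc,
          show (algebraMap F K) (-2) = -2 by rw [map_neg, map_ofNat]]
        exact v2
      have f3 : a*b*c = -1 := by
        apply inj
        rw [map_mul, map_mul, ha, hb, hc, show (algebraMap F K) (-1) = -1 by simp]
        exact v3
      have c1 : (C a + C b + C c : F[X]) = 1 := by
        rw [← C_add, ← C_add, f1, map_one]
      have c2 : (C a * C b + C a * C c + C b * C c : F[X]) = -2 := by
        rw [← C_mul, ← C_mul, ← C_mul, ← C_add, ← C_add, f2, map_neg, map_ofNat]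
      have c3 : (C a * C b * C c : F[X]) = -1 := by
        rw [← C_mul, ← C_mul, f3]
        simp
      have hfac : (X ^ 3 - X ^ 2 - 2 * X + 1 : F[X])
          = (X - C a) * (X - C b) * (X - C c) := by
        linear_combination (X^2 : F[X]) * c1 - (X : F[X]) * c2 + c3
      rw [hfac]
      exact ((Splits.X_sub_C _).mul (Splits.X_sub_C _)).mul (Splits.X_sub_C _)
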